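/- Let q^1, …, q^ℓ be pairwise distinct points of [0,1)^d and define H_{ij} = (1/ℓ²) ∏_{k=1}^d (1 − max(q^i_k, q^j_k)). Then H is symmetric positive definite (wᵀHw > 0 for all nonzero w ∈ ℝ^ℓ), and consequently, for any b ∈ ℝ^ℓ, the quadratic function w ↦ wᵀHw − bᵀw attains a unique minimizer over the nonempty compact convex feasible set {w ∈ ℝ^ℓ : w_i ≥ 0 for all i, (1/ℓ)∑_{i=1}^ℓ w_i = 1}. -/

import Mathlib

open MeasureTheory

lemma pos_aux (d l : ℕ) (q : Fin l → Fin d → ℝ)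
    (hq : ∀ i k, q i k ∈ Set.Ico (0:ℝ) 1)
    (hinj : Function.Injective q)
    (w : Fin l → ℝ) (hw : w ≠ 0) :
    0 < ∑ i, ∑ j, w i * w j * ∏ k, (1 - max (q i k) (q j k)) := by
  classical
  set S : Fin l → Set (Fin d → ℝ) := fun i => Set.univ.pi fun k => Set.Ico (q i k) 1 with hS
  set g : Fin l → (Fin d → ℝ) → ℝ := fun i => (S i).indicator 1 with hg
  have hSm : ∀ i, MeasurableSet (S i) := fun i =>
    MeasurableSet.univ_pi fun k => measurableSet_Ico
  have hSinter : ∀ i j, S i ∩ S j = Set.univ.pi fun k => Set.Ico (max (q i k) (q j k)) 1 := by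
    intro i j
    have h1 : ∀ k, Set.Ico (q i k) 1 ∩ Set.Ico (q j k) 1
        = Set.Ico (max (q i k) (q j k)) (1:ℝ) := by
      intro k; rw [Set.Ico_inter_Ico, min_self]
    simp only [hS, ← Set.pi_inter_distrib, h1]
  have hvol : ∀ i j, volume (S i ∩ S j) = ∏ k, ENNReal.ofReal (1 - max (q i k) (q j k)) := by
    intro i j
    rw [hSinter, volume_pi_pi]
    simp [Real.volume_Ico]
  have hvolfin : ∀ i j, volume (S i ∩ S j) < ⊤ := by
    intro i j
    rw [hvol]
    exact ENNReal.prod_lt_top fun k _ => ENNReal.ofReal_lt_top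
  have hmul : ∀ i j, (fun x => g i x * g j x) = (S i ∩ S j).indicator 1 := by
    intro i j
    funext x
    show (S i).indicator 1 x * (S j).indicator 1 x = _
    rw [Set.inter_indicator_one]
    rfl
  have hint : ∀ i j, Integrable (fun x => g i x * g j x) := by
    intro i j
    rw [hmul]
    rw [integrable_indicator_iff ((hSm i).inter (hSm j))]
    exact integrableOn_const (hvolfin i j).ne
  have hkey : ∀ i j, ∫ x, g i x * g j x = ∏ k, (1 - max (q i k) (q j k)) := by
    intro i j
    rw [hmul]
    have : ∫ x, (S i ∩ S j).indicator (1 : (Fin d → ℝ) → ℝ) x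
        = ∫ x, (S i ∩ S j).indicator (fun _ => (1:ℝ)) x := rfl
    rw [this, integral_indicator_const (1:ℝ) ((hSm i).inter (hSm j)), measureReal_def, hvol,
      ENNReal.toReal_prod, smul_eq_mul, mul_one]
    refine Finset.prod_congr rfl fun k _ => ?_
    rw [ENNReal.toReal_ofReal]
    have h1 := (hq i k).2; have h2 := (hq j k).2
    have : max (q i k) (q j k) < 1 := max_lt h1 h2
    linarith
  set F : (Fin d → ℝ) → ℝ := fun x => ∑ i, w i * g i x with hF
  have hFsq : ∀ x, F x ^ 2 = ∑ i, ∑ j, (w i * w j) * (g i x * g j x) := by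
    intro x
    rw [hF, sq, Finset.sum_mul_sum]
    refine Finset.sum_congr rfl fun i _ => Finset.sum_congr rfl fun j _ => by ring
  have hintterm : ∀ i j, Integrable (fun x => (w i * w j) * (g i x * g j x)) :=
    fun i j => (hint i j).const_mul _
  have hFint : Integrable (fun x => F x ^ 2) := by
    have : (fun x => F x ^ 2) = fun x => ∑ i, ∑ j, (w i * w j) * (g i x * g j x) := by
      funext x; exact hFsq x
    rw [this]
    exact integrable_finset_sum _ fun i _ => integrable_finset_sum _ fun j _ => hintterm i j
  have hIF : ∫ x, F x ^ 2 = ∑ i, ∑ j, w i * w j * ∏ k, (1 - max (q i k) (q j k)) := by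
    have : ∫ x, F x ^ 2 = ∫ x, ∑ i, ∑ j, (w i * w j) * (g i x * g j x) := by
      congr 1; funext x; exact hFsq x
    rw [this, integral_finset_sum _ fun i _ => integrable_finset_sum _ fun j _ => hintterm i j]
    refine Finset.sum_congr rfl fun i _ => ?_
    rw [integral_finset_sum _ fun j _ => hintterm i j]
    refine Finset.sum_congr rfl fun j _ => ?_
    rw [MeasureTheory.integral_const_mul, hkey]
  -- minimal element of support
  have hSupp : (Finset.univ.filter fun i => w i ≠ 0).Nonempty := by
    by_contra h
    rw [Finset.not_nonempty_iff_eq_empty, Finset.filter_eq_empty_iff] at h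
    exact hw (funext fun i => by simpa using h (Finset.mem_univ i))
  obtain ⟨m, hmmem, hmmin⟩ := Finset.exists_minimal
    (hSupp.image q)
  obtain ⟨j, hjmem, hjq⟩ := Finset.mem_image.1 hmmem
  have hwj : w j ≠ 0 := (Finset.mem_filter.1 hjmem).2
  have hjmin : ∀ i, w i ≠ 0 → (∀ k, q i k ≤ q j k) → i = j := by
    intro i hi hle
    have hqi : q i ∈ (Finset.univ.filter fun i => w i ≠ 0).image q :=
      Finset.mem_image.2 ⟨i, Finset.mem_filter.2 ⟨Finset.mem_univ i, hi⟩, rfl⟩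
    have hle' : q i ≤ q j := fun k => hle k
    have := hmmin hqi
    rw [← hjq] at this
    have : q i = q j := le_antisymm hle' (this hle')
    exact hinj this
  -- choose epsilon
  set A : Finset ℝ := insert 1 ((Finset.univ.image fun k => 1 - q j k) ∪
    (Finset.univ.image fun p : Fin l × Fin d =>
      if q j p.2 < q p.1 p.2 then q p.1 p.2 - q j p.2 else 1)) with hA
  have hAne : A.Nonempty := ⟨1, Finset.mem_insert_self _ _⟩
  set ε : ℝ := A.min' hAne with hε
  have hε0 : 0 < ε := by
    rw [hε, Finset.lt_min'_iff]
    intro a ha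
    rw [hA, Finset.mem_insert, Finset.mem_union] at ha
    rcases ha with h | h | h
    · simp [h]
    · obtain ⟨k, _, rfl⟩ := Finset.mem_image.1 h
      have := (hq j k).2; linarith
    · obtain ⟨p, _, rfl⟩ := Finset.mem_image.1 h
      split
      · next hlt => linarith
      · norm_num
  have hε1 : ∀ k, q j k + ε ≤ 1 := by
    intro k
    have : ε ≤ 1 - q j k := Finset.min'_le _ _ (by
      rw [hA, Finset.mem_insert, Finset.mem_union]
      exact Or.inr (Or.inl (Finset.mem_image.2 ⟨k, Finset.mem_univ k, rfl⟩)))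
    linarith
  have hε2 : ∀ i k, q j k < q i k → q j k + ε ≤ q i k := by
    intro i k hlt
    have : ε ≤ q i k - q j k := Finset.min'_le _ _ (by
      rw [hA, Finset.mem_insert, Finset.mem_union]
      refine Or.inr (Or.inr (Finset.mem_image.2 ⟨(i, k), Finset.mem_univ _, ?_⟩))
      simp [hlt])
    linarith
  set B : Set (Fin d → ℝ) := Set.univ.pi fun k => Set.Ioo (q j k) (q j k + ε) with hB
  have hBm : MeasurableSet B := MeasurableSet.univ_pi fun k => measurableSet_Ioo
  have hBvol : volume B = ∏ _k : Fin d, ENNReal.ofReal ε := by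
    rw [hB, volume_pi_pi]; simp
  have hFB : ∀ x ∈ B, F x = w j := by
    intro x hx
    have hgx : ∀ i, g i x = if ∀ k, q i k ≤ q j k then 1 else 0 := by
      intro i
      split
      · next hle =>
        have : x ∈ S i := by
          rw [hS]
          intro k _
          have hxk := hx k (Set.mem_univ k)
          exact ⟨le_of_lt (lt_of_le_of_lt (hle k) hxk.1), lt_of_lt_of_le hxk.2 (hε1 k)⟩
        simp [hg, Set.indicator_of_mem this]
      · next hle =>
        push_neg at hle
        obtain ⟨k, hk⟩ := hle
        have : x ∉ S i := by
          rw [hS]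
          intro hmem
          have hxk := hx k (Set.mem_univ k)
          have := (hmem k (Set.mem_univ k)).1
          have := hε2 i k hk
          linarith [hxk.2]
        simp [hg, Set.indicator_of_notMem this]
    have hFx : F x = ∑ i, w i * g i x := rfl
    rw [hFx, Finset.sum_eq_single j]
    · rw [hgx j]; simp
    · intro i _ hij
      rw [hgx i]
      split
      · next hle =>
        by_cases hwi : w i = 0
        · simp [hwi]
        · exact absurd (hjmin i hwi hle) hij
      · ring
    · intro h; exact absurd (Finset.mem_univ j) h
  have hptwise : ∀ x, B.indicator (fun _ => w j ^ 2) x ≤ F x ^ 2 := by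
    intro x
    by_cases hx : x ∈ B
    · rw [Set.indicator_of_mem hx, hFB x hx]
    · rw [Set.indicator_of_notMem hx]; positivity
  have hBint : Integrable (B.indicator fun _ => w j ^ 2) := by
    rw [integrable_indicator_iff hBm]
    refine integrableOn_const (ne_of_lt ?_)
    rw [hBvol]
    exact ENNReal.prod_lt_top fun k _ => ENNReal.ofReal_lt_top
  have hlow : ∫ x, B.indicator (fun _ => w j ^ 2) x ≤ ∫ x, F x ^ 2 :=
    integral_mono hBint hFint hptwise
  have hBval : ∫ x, B.indicator (fun _ => w j ^ 2) x = ε ^ d * w j ^ 2 := by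
    rw [integral_indicator_const _ hBm, measureReal_def, hBvol, smul_eq_mul]
    congr 1
    rw [ENNReal.toReal_prod]
    simp [ENNReal.toReal_ofReal hε0.le]
  have hpos : 0 < ε ^ d * w j ^ 2 := by positivity
  rw [← hIF]
  calc (0:ℝ) < ε ^ d * w j ^ 2 := hpos
    _ = ∫ x, B.indicator (fun _ => w j ^ 2) x := hBval.symm
    _ ≤ ∫ x, F x ^ 2 := hlow

set_option maxHeartbeats 1000000 in
theorem stmt_7 (d l : ℕ) (hl : 0 < l) (q : Fin l → Fin d → ℝ)
    (hq : ∀ i k, q i k ∈ Set.Ico (0:ℝ) 1)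
    (hinj : Function.Injective q)
    (H : Matrix (Fin l) (Fin l) ℝ)
    (hH : ∀ i j, H i j = (1 / (l:ℝ)^2) * ∏ k, (1 - max (q i k) (q j k))) :
    H.IsSymm ∧ (∀ w : Fin l → ℝ, w ≠ 0 → 0 < dotProduct w (H.mulVec w)) ∧
      ∀ b : Fin l → ℝ,
        ∃! w : Fin l → ℝ,
          w ∈ {v : Fin l → ℝ | (∀ i, 0 ≤ v i) ∧ (1 / (l:ℝ)) * ∑ i, v i = 1} ∧
          ∀ v ∈ {v : Fin l → ℝ | (∀ i, 0 ≤ v i) ∧ (1 / (l:ℝ)) * ∑ i, v i = 1},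
            dotProduct w (H.mulVec w) - dotProduct b w ≤
              dotProduct v (H.mulVec v) - dotProduct b v := by
  classical
  have hl0 : (0:ℝ) < (l:ℝ) := by exact_mod_cast hl
  have hsymm : H.IsSymm := by
    apply Matrix.IsSymm.ext
    intro i j
    rw [hH, hH]
    congr 1
    exact Finset.prod_congr rfl fun k _ => by rw [max_comm]
  have hpd : ∀ w : Fin l → ℝ, w ≠ 0 → 0 < dotProduct w (H.mulVec w) := by
    intro w hw
    have hexp : dotProduct w (H.mulVec w)
        = (1 / (l:ℝ)^2) * ∑ i, ∑ j, w i * w j * ∏ k, (1 - max (q i k) (q j k)) := by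
      simp only [dotProduct, Matrix.mulVec, Finset.mul_sum]
      refine Finset.sum_congr rfl fun i _ => Finset.sum_congr rfl fun j _ => ?_
      rw [hH]; ring
    rw [hexp]
    have := pos_aux d l q hq hinj w hw
    positivity
  refine ⟨hsymm, hpd, ?_⟩
  intro b
  set K : Set (Fin l → ℝ) := {v | (∀ i, 0 ≤ v i) ∧ (1 / (l:ℝ)) * ∑ i, v i = 1} with hK
  set f : (Fin l → ℝ) → ℝ :=
    fun v => dotProduct v (H.mulVec v) - dotProduct b v with hf
  have hKne : K.Nonempty := by
    refine ⟨fun _ => 1, fun i => zero_le_one, ?_⟩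
    simp
    field_simp
  have hKconv : ∀ u v : Fin l → ℝ, u ∈ K → v ∈ K →
      (1/2 : ℝ) • u + (1/2 : ℝ) • v ∈ K := by
    intro u v hu hv
    constructor
    · intro i
      have := hu.1 i; have := hv.1 i
      simp only [Pi.add_apply, Pi.smul_apply, smul_eq_mul]
      linarith
    · have hsum : ∑ i, ((1/2:ℝ) • u + (1/2:ℝ) • v) i
          = (1/2:ℝ) * ∑ i, u i + (1/2:ℝ) * ∑ i, v i := by
        simp [Finset.sum_add_distrib, Finset.mul_sum]
      rw [hsum]
      have h1 := hu.2; have h2 := hv.2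
      ring_nf
      ring_nf at h1 h2
      linarith
  have hKcl : IsClosed K := by
    have h1 : IsClosed {v : Fin l → ℝ | ∀ i, 0 ≤ v i} := by
      have : {v : Fin l → ℝ | ∀ i, 0 ≤ v i} = ⋂ i, {v | 0 ≤ v i} := by
        ext v; simp
      rw [this]
      exact isClosed_iInter fun i => isClosed_le continuous_const (continuous_apply i)
    have h2 : IsClosed {v : Fin l → ℝ | (1 / (l:ℝ)) * ∑ i, v i = 1} :=
      isClosed_eq (continuous_const.mul
        (continuous_finset_sum _ fun i _ => continuous_apply i)) continuous_const
    have : K = {v : Fin l → ℝ | ∀ i, 0 ≤ v i} ∩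
        {v : Fin l → ℝ | (1 / (l:ℝ)) * ∑ i, v i = 1} := rfl
    rw [this]
    exact h1.inter h2
  have hKsub : K ⊆ Set.Icc (0 : Fin l → ℝ) (fun _ => (l:ℝ)) := by
    intro v hv
    have hsum : ∑ i, v i = (l:ℝ) := by
      have := hv.2
      field_simp at this
      linarith
    constructor
    · exact fun i => hv.1 i
    · intro i
      have : v i ≤ ∑ j, v j :=
        Finset.single_le_sum (fun j _ => hv.1 j) (Finset.mem_univ i)
      simpa [hsum] using this
  have hKcpt : IsCompact K :=
    (isCompact_Icc).of_isClosed_subset hKcl hKsub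
  have hfc : Continuous f := by
    have h1 : Continuous fun v : Fin l → ℝ => dotProduct v (H.mulVec v) := by
      simp only [dotProduct, Matrix.mulVec]
      exact continuous_finset_sum _ fun i _ => (continuous_apply i).mul
        (continuous_finset_sum _ fun j _ => continuous_const.mul (continuous_apply j))
    have h2 : Continuous fun v : Fin l → ℝ => dotProduct b v := by
      simp only [dotProduct]
      exact continuous_finset_sum _ fun i _ => continuous_const.mul (continuous_apply i)
    exact h1.sub h2
  obtain ⟨w, hwK, hwmin⟩ := hKcpt.exists_isMinOn hKne hfc.continuousOn
  refine ⟨w, ⟨hwK, fun v hv => hwmin hv⟩, ?_⟩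
  intro v ⟨hvK, hvmin⟩
  by_contra hne
  have hfwv : f w = f v := le_antisymm (hwmin hvK) (hvmin w hwK)
  set m : Fin l → ℝ := (1/2 : ℝ) • v + (1/2 : ℝ) • w with hm
  have hmK : m ∈ K := hKconv v w hvK hwK
  have hQ : 0 < dotProduct (v - w) (H.mulVec (v - w)) :=
    hpd (v - w) (sub_ne_zero.2 hne)
  have hfm : f m = (f v + f w)/2
      - (1/4) * dotProduct (v - w) (H.mulVec (v - w)) := by
    simp only [hf, hm, add_dotProduct, smul_dotProduct,
      dotProduct_add, dotProduct_smul, sub_dotProduct,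
      dotProduct_sub, Matrix.mulVec_add, Matrix.mulVec_smul,
      Matrix.mulVec_sub, smul_eq_mul]
    ring_nf
  have hge : f v ≤ f m := hvmin m hmK
  rw [hfm, ← hfwv] at hge
  linarith
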